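/- Let K be a field of characteristic zero and A, B ∈ M₃(K) with det([A,B]) ≠ 0 and H([A,B]) ≠ 0. Then neither A nor B commutes with the other, and {A, B} admits no common invariant subspace of dimension 1 or 2 over the algebraic closure; in particular the pair is irreducible. -/

import Mathlib

open Matrix Polynomial

lemma aux_one_dim {k V : Type*} [Field k] [AddCommGroup V] [Module k V]
    (f g : V →ₗ[k] V) (U : Submodule k V) (hU : Module.finrank k U = 1)
    (hf : ∀ v ∈ U, f v ∈ U) (hg : ∀ v ∈ U, g v ∈ U) :
    ∃ u : V, u ≠ 0 ∧ f (g u) = g (f u) := by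
  have hbot : U ≠ ⊥ := by
    intro h; rw [h] at hU; simp at hU
  obtain ⟨u, huU, hu0⟩ := Submodule.exists_mem_ne_zero_of_ne_bot hbot
  have : Module.Finite k U := Module.finite_of_finrank_eq_succ hU
  have hspan : Submodule.span k {u} = U := by
    apply Submodule.eq_of_le_of_finrank_le
    · rwa [Submodule.span_singleton_le_iff_mem]
    · rw [hU, finrank_span_singleton hu0]
  obtain ⟨α, hα⟩ := Submodule.mem_span_singleton.mp (hspan ▸ hf u huU)
  obtain ⟨β, hβ⟩ := Submodule.mem_span_singleton.mp (hspan ▸ hg u huU)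
  refine ⟨u, hu0, ?_⟩
  rw [← hα, ← hβ, LinearMap.map_smul, LinearMap.map_smul, ← hα, ← hβ, smul_smul, smul_smul, mul_comm]

/-- Determinant of the 9×9 matrix whose columns are the vectorizations of nine 3×3 matrices. -/
noncomputable def vecDet {K : Type*} [CommRing K]
    (v : Fin 9 → Matrix (Fin 3) (Fin 3) K) : K :=
  Matrix.det (Matrix.of fun p q : Fin 3 × Fin 3 =>
    v (finProdFinEquiv q) p.1 p.2)

/-- H(M) = (tr(M)² − tr(M²))/2. -/
noncomputable def Hm {K : Type*} [Field K] (M : Matrix (Fin 3) (Fin 3) K) : K :=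
  (Matrix.trace M ^ 2 - Matrix.trace (M * M)) / 2

/-- The nine matrices I, A, A², B, B², AB, BA, [A,[A,B]], [B,[B,A]]. -/
def nine {K : Type*} [CommRing K] (A B : Matrix (Fin 3) (Fin 3) K) :
    Fin 9 → Matrix (Fin 3) (Fin 3) K :=
  ![1, A, A ^ 2, B, B ^ 2, A * B, B * A,
    A * (A * B - B * A) - (A * B - B * A) * A,
    B * (B * A - A * B) - (B * A - A * B) * B]

theorem stmt_19 {K : Type*} [Field K] [CharZero K] (A B : Matrix (Fin 3) (Fin 3) K)
    (hdet : (A * B - B * A).det ≠ 0) (hH : Hm (A * B - B * A) ≠ 0) :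
    A * B ≠ B * A ∧
    ∀ W : Submodule (AlgebraicClosure K) (Fin 3 → AlgebraicClosure K),
      (∀ v ∈ W, (A.map (algebraMap K (AlgebraicClosure K))).mulVec v ∈ W) →
      (∀ v ∈ W, (B.map (algebraMap K (AlgebraicClosure K))).mulVec v ∈ W) →
      W = ⊥ ∨ W = ⊤ := by
  set k := AlgebraicClosure K
  set φ := algebraMap K k
  set A' := A.map φ
  set B' := B.map φ
  have hC' : ((A * B - B * A).map φ) = A' * B' - B' * A' := by
    simp [A', B', Matrix.map_sub, Matrix.map_mul]
  set C' := A' * B' - B' * A' with hC'def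
  have hdet' : C'.det ≠ 0 := by
    rw [← hC']
    have : ((A * B - B * A).map ⇑φ).det = φ ((A * B - B * A).det) :=
      (RingHom.map_det φ _).symm
    rw [this]
    exact fun h => hdet ((_root_.map_eq_zero φ).mp h)
  have hunit : IsUnit C' := by
    rw [Matrix.isUnit_iff_isUnit_det]
    exact isUnit_iff_ne_zero.mpr hdet'
  constructor
  · intro h
    apply hdet
    rw [h, sub_self, Matrix.det_zero]
  intro W hA hB
  set a := Matrix.mulVecLin A'
  set b := Matrix.mulVecLin B'
  set c := Matrix.mulVecLin C'
  have hc : ∀ v, c v = a (b v) - b (a v) := by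
    intro v
    simp [c, a, b, hC'def, Matrix.sub_mulVec, ← Matrix.mulVec_mulVec,
      Matrix.mulVecLin_apply]
  have hcinj : Function.Injective c := by
    intro x y h
    have : C'⁻¹ *ᵥ (C' *ᵥ x) = C'⁻¹ *ᵥ (C' *ᵥ y) := by
      simp only [c, Matrix.mulVecLin_apply] at h; rw [h]
    rwa [Matrix.mulVec_mulVec, Matrix.mulVec_mulVec, Matrix.nonsing_inv_mul _
      (isUnit_iff_ne_zero.mpr hdet'), Matrix.one_mulVec, Matrix.one_mulVec] at this
  have hcsurj : Function.Surjective c := by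
    intro w
    refine ⟨C'⁻¹ *ᵥ w, ?_⟩
    simp only [c, Matrix.mulVecLin_apply, Matrix.mulVec_mulVec,
      Matrix.mul_nonsing_inv _ (isUnit_iff_ne_zero.mpr hdet'), Matrix.one_mulVec]
    rw [Matrix.mulVec_mulVec, Matrix.mul_nonsing_inv _ (isUnit_iff_ne_zero.mpr hdet'), Matrix.one_mulVec]
  by_contra hcon
  push_neg at hcon
  obtain ⟨hWbot, hWtop⟩ := hcon
  have hVrank : Module.finrank k (Fin 3 → k) = 3 := by simp
  have h1 : Module.finrank k W ≠ 0 := by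
    intro h
    exact hWbot (Submodule.finrank_eq_zero.mp h)
  have h2 : Module.finrank k W < 3 :=
    lt_of_lt_of_le (Submodule.finrank_lt hWtop) (le_of_eq hVrank)
  have haW : ∀ v ∈ W, a v ∈ W := fun v hv => hA v hv
  have hbW : ∀ v ∈ W, b v ∈ W := fun v hv => hB v hv
  have hcase : Module.finrank k W = 1 ∨ Module.finrank k W = 2 := by omega
  rcases hcase with h | h
  · -- dim 1
    obtain ⟨u, hu0, hcomm⟩ := aux_one_dim a b W h haW hbW
    apply hu0
    apply hcinj
    rw [hc, hcomm, sub_self, map_zero]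
  · -- dim 2
    set U := W.dualAnnihilator
    have hUrank : Module.finrank k U = 1 := by
      have e1 := (Subspace.quotEquivAnnihilator W).finrank_eq
      have e2 := Submodule.finrank_quotient_add_finrank W
      rw [hVrank, h] at e2
      rw [← e1]
      omega
    have hfU : ∀ ψ ∈ U, b.dualMap ψ ∈ U := by
      intro ψ hψ
      rw [Submodule.mem_dualAnnihilator] at hψ ⊢
      intro w hw
      exact hψ (b w) (hbW w hw)
    have hgU : ∀ ψ ∈ U, a.dualMap ψ ∈ U := by
      intro ψ hψ
      rw [Submodule.mem_dualAnnihilator] at hψ ⊢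
      intro w hw
      exact hψ (a w) (haW w hw)
    obtain ⟨ψ, hψ0, hcomm⟩ := aux_one_dim b.dualMap a.dualMap U hUrank hfU hgU
    apply hψ0
    apply LinearMap.ext
    intro v
    obtain ⟨w, rfl⟩ := hcsurj v
    have h3 := congrFun (congrArg (DFunLike.coe) hcomm) w
    simp only [LinearMap.dualMap_apply] at h3
    rw [hc, map_sub, h3, sub_self, LinearMap.zero_apply]
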